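/- For every h ∈ C↑_sur(b^ω), the subsets of Y_h order isomorphic to ℚ are exactly the sets Y_{f∘h} for f ∈ C↑_sur(b^ω): [Y_h]^η = {Y_{f∘h} : f ∈ C↑_sur(b^ω)}. -/

import Mathlib

noncomputable section
open Classical

/-- Lexicographic strict order on `ℕ → Fin b`. -/
def lexLT (b : ℕ) (x y : ℕ → Fin b) : Prop :=
  ∃ n, (∀ m, m < n → x m = y m) ∧ x n < y n

/-- Lexicographic order `≤_lex` on `ℕ → Fin b`. -/
def lexLE (b : ℕ) (x y : ℕ → Fin b) : Prop := x = y ∨ lexLT b x y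

def IsGreatestLex (b : ℕ) (S : Set (ℕ → Fin b)) (x : ℕ → Fin b) : Prop :=
  x ∈ S ∧ ∀ y ∈ S, lexLE b y x

def IsLeastLex (b : ℕ) (S : Set (ℕ → Fin b)) (x : ℕ → Fin b) : Prop :=
  x ∈ S ∧ ∀ y ∈ S, lexLE b x y

/-- `S` is an interval for the lexicographic order. -/
def LexInterval (b : ℕ) (S : Set (ℕ → Fin b)) : Prop :=
  ∀ x ∈ S, ∀ y ∈ S, ∀ z, lexLE b x z → lexLE b z y → z ∈ S

/-- The basic clopen set of sequences extending the finite sequence `s`. -/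
def W (b : ℕ) (s : List (Fin b)) : Set (ℕ → Fin b) :=
  {x | ∀ i, (hi : i < s.length) → x i = s.get ⟨i, hi⟩}

/-- Continuous nondecreasing surjections of `b^ω`, i.e. members of `C↑_sur(b^ω)`. -/
def CSur (b : ℕ) (f : (ℕ → Fin b) → (ℕ → Fin b)) : Prop :=
  Continuous f ∧ Function.Surjective f ∧ ∀ x y, lexLE b x y → lexLE b (f x) (f y)

/-- A filtering on `b^ω`. -/
def Filtering (b : ℕ) (U : List (Fin b) → Set (ℕ → Fin b)) : Prop :=
  (∀ s, (U s).Nonempty ∧ IsClopen (U s) ∧ LexInterval b (U s)) ∧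
  U [] = Set.univ ∧
  (∀ s, U s = ⋃ i : Fin b, U (s ++ [i])) ∧
  (∀ s, ∀ i j : Fin b, i ≠ j → Disjoint (U (s ++ [i])) (U (s ++ [j]))) ∧
  (∀ s, ∀ i j : Fin b, i < j → ∀ x y,
    IsGreatestLex b (U (s ++ [i])) x → IsGreatestLex b (U (s ++ [j])) y → lexLT b x y)

/-- `A_b`: sequences eventually equal to `b-1` (the top of `Fin b`), except the constant
top sequence (the lexicographic maximum of `b^ω`). -/
def AbSet (b : ℕ) : Set (ℕ → Fin b) :=
  {x | (∃ N, ∀ n, N ≤ n → ∀ j : Fin b, j ≤ x n) ∧ ¬ ∀ n, ∀ j : Fin b, j ≤ x n}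

/-- `Y` is order isomorphic to `ℚ` with respect to the lexicographic order. -/
def OrderIsoQ (b : ℕ) (Y : Set (ℕ → Fin b)) : Prop :=
  ∃ e : ℚ ≃ Y, ∀ p q : ℚ, p ≤ q ↔ lexLE b (e p).1 (e q).1

/-- `Y_f = {max f⁻¹(W_s) : s ∈ b^{<ω}} \ {max b^ω}`. -/
def Yset (b : ℕ) (f : (ℕ → Fin b) → (ℕ → Fin b)) : Set (ℕ → Fin b) :=
  {x | (∃ s : List (Fin b), IsGreatestLex b (f ⁻¹' W b s) x) ∧ ¬ ∀ n, ∀ j : Fin b, j ≤ x n}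

/-- The metric `ρ_b` on `b^ω`. -/
def rhoB (b : ℕ) (x y : ℕ → Fin b) : ℝ :=
  if h : x = y then 0 else (2 : ℝ) ^ (-(Nat.find (Function.ne_iff.mp h) : ℤ))

/-- The sup-metric `ρ_∞` on `C↑_sur(b^ω)`. -/
def rhoInf (b : ℕ) (f g : (ℕ → Fin b) → (ℕ → Fin b)) : ℝ :=
  ⨆ x, rhoB b (f x) (g x)

/-- `⌊log₂(1/ε)⌋ + 1`. -/
def kOf (ε : ℝ) : ℕ := ⌊Real.logb 2 (1 / ε)⌋₊ + 1

/-- The `l`-th odd tangent number `t_l = tan^{(2l-1)}(0)`. -/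
def oddTangent (l : ℕ) : ℝ := iteratedDeriv (2 * l - 1) Real.tan 0

/-- The lexicographically increasing enumeration of `b^k`: `sEnum b k hb i` is the
`i`-th element of `b^k` in lexicographic order (base-`b` digits, most significant first). -/
def sEnum (b k : ℕ) (hb : 0 < b) (i : ℕ) : List (Fin b) :=
  List.ofFn fun j : Fin k => (⟨i / b ^ (k - 1 - (j : ℕ)) % b, Nat.mod_lt _ hb⟩ : Fin b)

end

section Statement8Proof
open Classical Topology
noncomputable section
namespace S8
variable {b : ℕ}

lemma lexLT_iff (x y : ℕ → Fin b) : lexLT b x y ↔ toLex x < toLex y := Iff.rfl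
lemma lexLE_iff (x y : ℕ → Fin b) : lexLE b x y ↔ toLex x ≤ toLex y := by
  rw [le_iff_lt_or_eq]
  constructor
  · rintro (rfl|h); · exact Or.inr rfl
    · exact Or.inl ((lexLT_iff _ _).1 h)
  · rintro (h|h)
    · exact Or.inr ((lexLT_iff _ _).2 h)
    · exact Or.inl (congrArg ofLex h)

noncomputable instance : TopologicalSpace (Lex (ℕ → Fin b)) :=
  inferInstanceAs (TopologicalSpace (ℕ → Fin b))
instance : CompactSpace (Lex (ℕ → Fin b)) := inferInstanceAs (CompactSpace (ℕ → Fin b))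

lemma isOpen_cyl (x : ℕ → Fin b) (k : ℕ) :
    IsOpen {y : ℕ → Fin b | ∀ m, m < k → y m = x m} := by
  have : {y : ℕ → Fin b | ∀ m, m < k → y m = x m}
      = ⋂ m ∈ Finset.range k, (fun y : ℕ → Fin b => y m) ⁻¹' {x m} := by
    ext y; simp
  rw [this]
  exact isOpen_biInter_finset fun m _ => (continuous_apply m).isOpen_preimage _ (isOpen_discrete _)

lemma isClosed_cyl (x : ℕ → Fin b) (k : ℕ) :
    IsClosed {y : ℕ → Fin b | ∀ m, m < k → y m = x m} := by
  have : {y : ℕ → Fin b | ∀ m, m < k → y m = x m}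
      = ⋂ m ∈ Finset.range k, (fun y : ℕ → Fin b => y m) ⁻¹' {x m} := by
    ext y; simp
  rw [this]
  exact isClosed_biInter fun m _ => (IsClosed.preimage (continuous_apply m) (isClosed_discrete _))

/-- key glue: if at every coordinate either equal or the right side is top, then `≤`. -/
lemma lexLE_of_forall {x y : ℕ → Fin b} (h : ∀ n, x n = y n ∨ ∀ j : Fin b, j ≤ y n) :
    lexLE b x y := by
  rw [lexLE_iff]
  by_contra hc
  obtain ⟨n, -, h2⟩ := (lexLT_iff y x).2 (lt_of_not_ge hc)
  rcases h n with h3 | h3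
  · exact absurd h3.symm (ne_of_lt h2)
  · exact absurd (h3 (x n)) (not_le.2 h2)

lemma lexLE_antisymm {x y : ℕ → Fin b} (h1 : lexLE b x y) (h2 : lexLE b y x) : x = y := by
  have := le_antisymm ((lexLE_iff x y).1 h1) ((lexLE_iff y x).1 h2)
  exact congrArg ofLex this

lemma lexLE_trans {x y z : ℕ → Fin b} (h1 : lexLE b x y) (h2 : lexLE b y z) : lexLE b x z :=
  (lexLE_iff x z).2 (le_trans ((lexLE_iff x y).1 h1) ((lexLE_iff y z).1 h2))

lemma lexLE_total (x y : ℕ → Fin b) : lexLE b x y ∨ lexLE b y x := by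
  rcases le_total (toLex x) (toLex y) with h | h
  · exact Or.inl ((lexLE_iff x y).2 h)
  · exact Or.inr ((lexLE_iff y x).2 h)

instance : ClosedIciTopology (Lex (ℕ → Fin b)) := by
  constructor
  intro a
  rw [← isOpen_compl_iff]
  have e : (Set.Ici a)ᶜ = Set.Iio a := by ext z; simp
  rw [e, isOpen_iff_forall_mem_open]
  intro z hz
  obtain ⟨n, h1, h2⟩ := (show lexLT b (ofLex z) (ofLex a) from hz)
  exact ⟨{y | ∀ m, m < n + 1 → y m = ofLex z m}, fun w hw =>
      (show lexLT b (ofLex w) (ofLex a) from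
        ⟨n, fun m hm => (hw m (hm.trans n.lt_succ_self)).trans (h1 m hm),
          by have := hw n n.lt_succ_self; show ofLex w n < ofLex a n;
             rw [show ofLex w n = ofLex z n from this]; exact h2⟩),
    isOpen_cyl (b := b) _ _, fun m _ => rfl⟩

instance : ClosedIicTopology (Lex (ℕ → Fin b)) := by
  constructor
  intro a
  rw [← isOpen_compl_iff]
  have e : (Set.Iic a)ᶜ = Set.Ioi a := by ext z; simp
  rw [e, isOpen_iff_forall_mem_open]
  intro z hz
  obtain ⟨n, h1, h2⟩ := (show lexLT b (ofLex a) (ofLex z) from hz)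
  exact ⟨{y | ∀ m, m < n + 1 → y m = ofLex z m}, fun w hw =>
      (show lexLT b (ofLex a) (ofLex w) from
        ⟨n, fun m hm => (h1 m hm).trans (hw m (hm.trans n.lt_succ_self)).symm,
          by have := hw n n.lt_succ_self; show ofLex a n < ofLex w n;
             rw [show ofLex w n = ofLex z n from this]; exact h2⟩),
    isOpen_cyl (b := b) _ _, fun m _ => rfl⟩

lemma exists_greatestLex {S : Set (ℕ → Fin b)} (hcl : IsClosed S) (hne : S.Nonempty) :
    ∃ x, IsGreatestLex b S x := by
  have hcl' : IsClosed (X := Lex (ℕ → Fin b)) S := hcl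
  have hc : IsCompact (X := Lex (ℕ → Fin b)) S := hcl'.isCompact
  obtain ⟨x, hx, hx2⟩ := hc.exists_isGreatest hne
  exact ⟨ofLex x, hx, fun y hy => (lexLE_iff _ _).2 (hx2 hy)⟩

/-- `evTop x`: `x` is eventually the top digit. -/
def evTop (x : ℕ → Fin b) : Prop := ∃ N, ∀ n, N ≤ n → ∀ j : Fin b, j ≤ x n
/-- `isTop x`: `x` is the constant-top sequence. -/
def isTop (x : ℕ → Fin b) : Prop := ∀ n, ∀ j : Fin b, j ≤ x n

def topF (hb : 0 < b) : Fin b := ⟨b - 1, Nat.sub_lt hb one_pos⟩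

lemma le_topF (hb : 0 < b) (j : Fin b) : j ≤ topF hb := by
  rw [Fin.le_def]; exact Nat.le_pred_of_lt j.2

lemma eq_topF {hb : 0 < b} {a : Fin b} (h : ∀ j : Fin b, j ≤ a) : a = topF hb :=
  le_antisymm (le_topF hb a) (h _)

lemma greatest_evTop {S : Set (ℕ → Fin b)} (hS : IsOpen S) {x : ℕ → Fin b}
    (hx : IsGreatestLex b S x) : evTop x := by
  have hb : 0 < b := (x 0).pos
  obtain ⟨I, u, hu, hsub⟩ := isOpen_pi_iff.1 hS x hx.1
  set k := I.sup id + 1 with hk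
  have hIk : ∀ i ∈ I, i < k := fun i hi => Nat.lt_succ_of_le (Finset.le_sup (f := id) hi)
  set y : ℕ → Fin b := fun n => if n < k then x n else topF hb with hy
  have hyS : y ∈ S := by
    apply hsub
    rw [Set.mem_pi]
    intro i hi
    have : y i = x i := by simp only [hy, if_pos (hIk i hi)]
    rw [this]; exact (hu i hi).2
  have h1 : lexLE b y x := hx.2 y hyS
  have h2 : lexLE b x y := lexLE_of_forall fun n => by
    by_cases h : n < k
    · exact Or.inl (by simp [hy, h])
    · exact Or.inr (by intro j; simp only [hy, if_neg h]; exact le_topF hb j)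
  have : x = y := lexLE_antisymm h2 h1
  refine ⟨k, fun n hn j => ?_⟩
  rw [this]; simp only [hy, if_neg (not_lt.2 hn)]; exact le_topF hb j

lemma open_contains_cyl {S : Set (ℕ → Fin b)} (hS : IsOpen S) {c : ℕ → Fin b} (hc : c ∈ S) :
    ∃ k, ∀ y : ℕ → Fin b, (∀ m, m < k → y m = c m) → y ∈ S := by
  obtain ⟨I, u, hu, hsub⟩ := isOpen_pi_iff.1 hS c hc
  refine ⟨I.sup id + 1, fun y hy => hsub ?_⟩
  rw [Set.mem_pi]
  intro i hi
  rw [hy i (Nat.lt_succ_of_le (Finset.le_sup (f := id) hi))]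
  exact (hu i hi).2

lemma greatestLex_unique {S : Set (ℕ → Fin b)} {x y : ℕ → Fin b}
    (hx : IsGreatestLex b S x) (hy : IsGreatestLex b S y) : x = y :=
  lexLE_antisymm (hy.2 x hx.1) (hx.2 y hy.1)

lemma greatest_image {g : (ℕ → Fin b) → (ℕ → Fin b)} (hsur : Function.Surjective g)
    (hmono : ∀ x y, lexLE b x y → lexLE b (g x) (g y)) {A : Set (ℕ → Fin b)} {x : ℕ → Fin b}
    (hx : IsGreatestLex b (g ⁻¹' A) x) : IsGreatestLex b A (g x) := by
  refine ⟨hx.1, fun a ha => ?_⟩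
  obtain ⟨y, rfl⟩ := hsur a
  exact hmono _ _ (hx.2 y ha)

lemma CSur.comp {f g : (ℕ → Fin b) → (ℕ → Fin b)} (hf : CSur b f) (hg : CSur b g) :
    CSur b (f ∘ g) :=
  ⟨hf.1.comp hg.1, hf.2.1.comp hg.2.1, fun x y hxy => hf.2.2 _ _ (hg.2.2 x y hxy)⟩

/-- the prefix of length `k` of `c` as a list -/
def listPrefix (c : ℕ → Fin b) (k : ℕ) : List (Fin b) := List.ofFn fun i : Fin k => c i

@[simp] lemma listPrefix_length (c : ℕ → Fin b) (k : ℕ) : (listPrefix c k).length = k := by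
  simp [listPrefix]

lemma mem_W_listPrefix_iff {c y : ℕ → Fin b} {k : ℕ} :
    y ∈ W b (listPrefix c k) ↔ ∀ m, m < k → y m = c m := by
  constructor
  · intro hy m hm
    have := hy m (by simpa using hm)
    simpa [listPrefix] using this
  · intro hy i hi
    have hik : i < k := by simpa using hi
    simp only [listPrefix, List.get_ofFn]
    simpa [listPrefix] using hy i hik

/-- the top extension of a list -/
def wExt (hb : 0 < b) (s : List (Fin b)) : ℕ → Fin b :=
  fun n => if h : n < s.length then s.get ⟨n, h⟩ else topF hb

lemma isClopen_W (hb : 0 < b) (s : List (Fin b)) : IsClopen (W b s) := by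
  have he : W b s = {y | ∀ m, m < s.length → y m = wExt hb s m} := by
    ext y
    constructor
    · intro hy m hm; rw [hy m hm]; simp [wExt, hm]
    · intro hy i hi; have := hy i hi; rwa [show wExt hb s i = s.get ⟨i, hi⟩ by simp [wExt, hi]] at this
  rw [he]
  exact ⟨isClosed_cyl _ _, isOpen_cyl _ _⟩

lemma greatest_W (hb : 0 < b) (s : List (Fin b)) : IsGreatestLex b (W b s) (wExt hb s) := by
  constructor
  · intro i hi; simp [wExt, hi]
  · intro y hy
    refine lexLE_of_forall fun n => ?_
    by_cases h : n < s.length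
    · exact Or.inl (by rw [hy n h]; simp [wExt, h])
    · exact Or.inr (by intro j; simp only [wExt, dif_neg h]; exact le_topF hb j)

lemma evTop_wExt (hb : 0 < b) (s : List (Fin b)) : evTop (wExt hb s) :=
  ⟨s.length, fun n hn j => by simp only [wExt, dif_neg (not_lt.2 hn)]; exact le_topF hb j⟩

/-- the constant top sequence -/
def topSeqF (hb : 0 < b) : ℕ → Fin b := fun _ => topF hb

lemma isTop_iff (hb : 0 < b) {x : ℕ → Fin b} : isTop x ↔ x = topSeqF hb := by
  constructor
  · intro h; funext n; exact eq_topF (h n)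
  · rintro rfl n j; exact le_topF hb j

lemma le_topSeqF (hb : 0 < b) (x : ℕ → Fin b) : lexLE b x (topSeqF hb) :=
  lexLE_of_forall fun n => Or.inr fun j => le_topF hb j

lemma csur_map_top {g : (ℕ → Fin b) → (ℕ → Fin b)} (hg : CSur b g) (hb : 0 < b) :
    g (topSeqF hb) = topSeqF hb := by
  refine lexLE_antisymm (le_topSeqF hb _) ?_
  obtain ⟨z, hz⟩ := hg.2.1 (topSeqF hb)
  have := hg.2.2 z (topSeqF hb) (le_topSeqF hb z)
  rwa [hz] at this

lemma Yset_subset_AbSet {g : (ℕ → Fin b) → (ℕ → Fin b)} (hg : CSur b g) :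
    Yset b g ⊆ AbSet b := by
  rintro x ⟨⟨s, hgr⟩, hnt⟩
  have hb : 0 < b := (x 0).pos
  exact ⟨greatest_evTop (hg.1.isOpen_preimage _ (isClopen_W hb s).2) hgr, hnt⟩

lemma isOpen_le_set {a : ℕ → Fin b} (ha : evTop a) : IsOpen {y : ℕ → Fin b | lexLE b y a} := by
  rw [isOpen_iff_forall_mem_open]
  intro z hz
  rcases hz with rfl | ⟨n, h1, h2⟩
  · obtain ⟨N, hN⟩ := ha
    refine ⟨{y | ∀ m, m < N → y m = z m}, fun w hw => lexLE_of_forall fun n => ?_,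
      isOpen_cyl _ _, fun m _ => rfl⟩
    by_cases h : n < N
    · exact Or.inl (hw n h)
    · exact Or.inr (hN n (not_lt.1 h))
  · refine ⟨{y | ∀ m, m < n + 1 → y m = z m}, fun w hw => Or.inr ?_, isOpen_cyl _ _, fun m _ => rfl⟩
    exact ⟨n, fun m hm => (hw m (hm.trans n.lt_succ_self)).trans (h1 m hm),
      by rw [hw n n.lt_succ_self]; exact h2⟩

lemma isClosed_le_set (a : ℕ → Fin b) : IsClosed {y : ℕ → Fin b | lexLE b y a} := by
  have h1 : IsClosed (X := Lex (ℕ → Fin b)) (Set.Iic (toLex a)) := isClosed_Iic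
  have he : {y : ℕ → Fin b | lexLE b y a} = (Set.Iic (toLex a) : Set (Lex (ℕ → Fin b))) := by
    ext y; exact lexLE_iff y a
  rw [he]; exact h1

lemma greatest_preimage_cyl {h : (ℕ → Fin b) → (ℕ → Fin b)} {S : Set (ℕ → Fin b)}
    (hS : IsOpen S) {x : ℕ → Fin b} (hx : IsGreatestLex b (h ⁻¹' S) x) :
    ∃ t, IsGreatestLex b (h ⁻¹' W b t) x := by
  obtain ⟨k, hk⟩ := open_contains_cyl hS hx.1
  refine ⟨listPrefix (h x) k, ⟨?_, fun y hy => hx.2 y ?_⟩⟩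
  · exact mem_W_listPrefix_iff.2 fun m _ => rfl
  · exact hk _ (mem_W_listPrefix_iff.1 hy)

lemma Yset_comp_subset {f h : (ℕ → Fin b) → (ℕ → Fin b)} (hf : CSur b f) (hh : CSur b h) :
    Yset b (f ∘ h) ⊆ Yset b h := by
  rintro x ⟨⟨s, hgr⟩, hnt⟩
  have hb : 0 < b := (x 0).pos
  have he : (f ∘ h) ⁻¹' W b s = h ⁻¹' (f ⁻¹' W b s) := rfl
  rw [he] at hgr
  obtain ⟨t, ht⟩ := greatest_preimage_cyl (hf.1.isOpen_preimage _ (isClopen_W hb s).2) hgr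
  exact ⟨⟨t, ht⟩, hnt⟩

/-- The subtype of the lexicographic type corresponding to a set. -/
abbrev LexSub (Z : Set (ℕ → Fin b)) := {q : Lex (ℕ → Fin b) // ofLex q ∈ Z}

def lexSubEquiv (Z : Set (ℕ → Fin b)) : Z ≃ LexSub Z where
  toFun z := ⟨toLex z.1, z.2⟩
  invFun q := ⟨ofLex q.1, q.2⟩
  left_inv _ := rfl
  right_inv _ := rfl

lemma orderIsoQ_iff (Z : Set (ℕ → Fin b)) :
    OrderIsoQ b Z ↔ Nonempty (ℚ ≃o LexSub Z) := by
  constructor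
  · rintro ⟨e, he⟩
    exact ⟨{ toEquiv := e.trans (lexSubEquiv Z),
             map_rel_iff' := by
               intro p q
               rw [Subtype.coe_le_coe.symm]
               exact ((he p q).trans (lexLE_iff _ _)).symm }⟩
  · rintro ⟨g⟩
    refine ⟨g.toEquiv.trans (lexSubEquiv Z).symm, fun p q => ?_⟩
    rw [lexLE_iff]
    have : p ≤ q ↔ g p ≤ g q := g.map_rel_iff.symm
    rw [this, ← Subtype.coe_le_coe]
    rfl

lemma mem_AbSet_of_Yset {g : (ℕ → Fin b) → (ℕ → Fin b)} (hg : CSur b g)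
    {x : ℕ → Fin b} (hx : x ∈ Yset b g) : g x ∈ AbSet b := by
  have hb : 0 < b := (x 0).pos
  obtain ⟨⟨s, hgr⟩, hnt⟩ := hx
  have him : IsGreatestLex b (W b s) (g x) := greatest_image hg.2.1 hg.2.2 hgr
  have hgx : g x = wExt hb s := greatestLex_unique him (greatest_W hb s)
  refine ⟨hgx ▸ evTop_wExt hb s, fun htp => hnt ?_⟩
  have hgtop : g x = topSeqF hb := (isTop_iff hb).1 htp
  have h1 : topSeqF hb ∈ g ⁻¹' W b s := by
    show g (topSeqF hb) ∈ W b s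
    rw [csur_map_top hg hb, ← hgtop]
    exact him.1
  have h2 : x = topSeqF hb := lexLE_antisymm (le_topSeqF hb x) (hgr.2 _ h1)
  rw [h2]
  exact (isTop_iff hb).2 rfl

lemma Yset_inj {g : (ℕ → Fin b) → (ℕ → Fin b)} (hg : CSur b g)
    {x y : ℕ → Fin b} (hx : x ∈ Yset b g) (hy : y ∈ Yset b g) (hxy : g x = g y) : x = y := by
  obtain ⟨⟨s, hgrx⟩, -⟩ := hx
  obtain ⟨⟨t, hgry⟩, -⟩ := hy
  have hxs : g x ∈ W b s := (greatest_image hg.2.1 hg.2.2 hgrx).1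
  have hyt : g y ∈ W b t := (greatest_image hg.2.1 hg.2.2 hgry).1
  have h1 : lexLE b y x := hgrx.2 y (by show g y ∈ W b s; rw [← hxy]; exact hxs)
  have h2 : lexLE b x y := hgry.2 x (by show g x ∈ W b t; rw [hxy]; exact hyt)
  exact lexLE_antisymm h2 h1

lemma Yset_surj {g : (ℕ → Fin b) → (ℕ → Fin b)} (hg : CSur b g)
    {a : ℕ → Fin b} (ha : a ∈ AbSet b) : ∃ x ∈ Yset b g, g x = a := by
  have hb : 0 < b := (a 0).pos
  obtain ⟨⟨N, hN⟩, hnt⟩ := ha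
  have haw : a = wExt hb (listPrefix a N) := by
    funext n
    by_cases h : n < N
    · simp [wExt, listPrefix, h]
    · simp only [wExt, listPrefix_length, dif_neg h]
      exact eq_topF (hN n (not_lt.1 h))
  set s := listPrefix a N with hs
  have hne : (g ⁻¹' W b s).Nonempty := by
    obtain ⟨z, hz⟩ := hg.2.1 (wExt hb s)
    exact ⟨z, by show g z ∈ W b s; rw [hz]; exact (greatest_W hb s).1⟩
  obtain ⟨x, hgr⟩ := exists_greatestLex (IsClosed.preimage hg.1 (isClopen_W hb s).1) hne
  have hgx : g x = a := by
    rw [haw]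
    exact greatestLex_unique (greatest_image hg.2.1 hg.2.2 hgr) (greatest_W hb s)
  refine ⟨x, ⟨⟨s, hgr⟩, fun htp => hnt ?_⟩, hgx⟩
  have : x = topSeqF hb := (isTop_iff hb).1 htp
  rw [← hgx, this, csur_map_top hg hb]
  exact (isTop_iff hb).2 rfl

lemma nonempty_orderIso_Yg_Ab {g : (ℕ → Fin b) → (ℕ → Fin b)} (hg : CSur b g) :
    Nonempty (LexSub (Yset b g) ≃o LexSub (AbSet b)) := by
  set F : LexSub (Yset b g) → LexSub (AbSet b) :=
    fun x => ⟨toLex (g (ofLex x.1)), mem_AbSet_of_Yset hg x.2⟩ with hF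
  have hmono : StrictMono F := by
    intro x y hxy
    have hle : lexLE b (g (ofLex x.1)) (g (ofLex y.1)) :=
      hg.2.2 _ _ ((lexLE_iff _ _).2 (le_of_lt hxy))
    have hne : g (ofLex x.1) ≠ g (ofLex y.1) := fun he =>
      hxy.ne (Subtype.ext (Yset_inj hg x.2 y.2 he))
    rw [← Subtype.coe_lt_coe]
    exact lt_of_le_of_ne ((lexLE_iff _ _).1 hle) (fun hc => hne (congrArg ofLex hc))
  have hsurj : Function.Surjective F := by
    rintro ⟨a, ha⟩
    obtain ⟨x, hx, hgx⟩ := Yset_surj hg (ha : ofLex a ∈ AbSet b)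
    exact ⟨⟨toLex x, hx⟩, Subtype.ext (congrArg toLex hgx)⟩
  exact ⟨StrictMono.orderIsoOfSurjective F hmono hsurj⟩

section Ab

def zeroF (hb2 : 2 ≤ b) : Fin b := ⟨0, by omega⟩

lemma zero_lt_topF (hb2 : 2 ≤ b) : zeroF hb2 < topF (Nat.lt_of_lt_of_le Nat.zero_lt_two hb2) := by
  rw [Fin.lt_def]
  show 0 < b - 1
  omega

lemma exists_ne_topF (hb : 0 < b) {x : ℕ → Fin b} (h : ¬ ∀ n, ∀ j : Fin b, j ≤ x n) :
    ∃ n, x n ≠ topF hb := by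
  push_neg at h
  obtain ⟨n, j, hj⟩ := h
  exact ⟨n, fun he => (not_lt.2 (le_topF _ j)) (he ▸ hj)⟩

lemma mem_AbSet_intro (hb : 0 < b) {x : ℕ → Fin b} (N : ℕ) (h1 : ∀ n, N ≤ n → x n = topF hb)
    (n₀ : ℕ) (h2 : x n₀ ≠ topF hb) : x ∈ AbSet b :=
  ⟨⟨N, fun n hn j => (h1 n hn) ▸ le_topF _ j⟩, fun htp => h2 (eq_topF (htp n₀))⟩

lemma listPrefix_getD {x : ℕ → Fin b} {k m : ℕ} (hb : 0 < b) (hm : m < k) :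
    (listPrefix x k).getD m (topF hb) = x m := by
  simp [listPrefix, List.getD, hm]

lemma countable_Ab (hb : 0 < b) : Countable (LexSub (AbSet b)) := by
  set F : LexSub (AbSet b) → List (Fin b) :=
    fun a => listPrefix (ofLex a.1) (@Nat.find _ (Classical.decPred _) a.2.1) with hF
  have hinj : Function.Injective F := by
    rintro ⟨x, hx⟩ ⟨y, hy⟩ hxy
    simp only [hF] at hxy
    set N₁ := @Nat.find _ (Classical.decPred _) hx.1 with hN₁
    set N₂ := @Nat.find _ (Classical.decPred _) hy.1 with hN₂
    have hlen : N₁ = N₂ := by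
      have := congrArg List.length hxy
      simpa using this
    have hNspec₁ : ∀ m, N₁ ≤ m → ∀ j : Fin b, j ≤ ofLex x m :=
      @Nat.find_spec _ (Classical.decPred _) hx.1
    have hNspec₂ : ∀ m, N₂ ≤ m → ∀ j : Fin b, j ≤ ofLex y m :=
      @Nat.find_spec _ (Classical.decPred _) hy.1
    apply Subtype.ext
    show (x : Lex (ℕ → Fin b)) = y
    funext n
    by_cases h : n < N₁
    · have := congrArg (fun l => l.getD n (topF hb)) hxy
      simp only [listPrefix_getD hb h, ← hlen, listPrefix_getD hb (hlen ▸ h)] at this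
      exact this
    · have e1 : ofLex x n = topF hb := eq_topF (hNspec₁ n (not_lt.1 h))
      have e2 : ofLex y n = topF hb := eq_topF (hNspec₂ n (hlen ▸ not_lt.1 h))
      exact e1.trans e2.symm
  exact hinj.countable

lemma nonempty_Ab (hb2 : 2 ≤ b) : Nonempty (LexSub (AbSet b)) := by
  have hb : 0 < b := by omega
  refine ⟨⟨toLex (fun n => if n = 0 then zeroF hb2 else topF hb), ?_⟩⟩
  refine mem_AbSet_intro hb 1 (fun n hn => by simp [Nat.pos_iff_ne_zero.1 hn]) 0 ?_
  show (if (0:ℕ) = 0 then zeroF hb2 else topF hb) ≠ topF hb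
  rw [if_pos rfl]
  exact ne_of_lt (zero_lt_topF hb2)

lemma dense_Ab (hb2 : 2 ≤ b) : DenselyOrdered (LexSub (AbSet b)) := by
  have hb : 0 < b := by omega
  constructor
  rintro ⟨x, hx⟩ ⟨y, hy⟩ hlt
  rw [Subtype.mk_lt_mk] at hlt
  obtain ⟨n, h1, h2⟩ := (show lexLT b (ofLex x) (ofLex y) from hlt)
  obtain ⟨N', hN'⟩ := hy.1
  set M := max (n + 1) N' with hM
  have hMn : n < M := lt_of_lt_of_le n.lt_succ_self (le_max_left _ _)
  have hyM : ofLex y M = topF hb := eq_topF (hN' M (le_max_right _ _))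
  set z : ℕ → Fin b := fun m => if m < M then ofLex y m else if m = M then zeroF hb2 else topF hb
    with hz
  have hzmem : z ∈ AbSet b := by
    refine mem_AbSet_intro hb (M + 1) (fun m hm => ?_) M ?_
    · simp only [hz]
      rw [if_neg (by omega), if_neg (by omega)]
    · have hzM : z M = zeroF hb2 := by simp [hz]
      rw [hzM]
      exact ne_of_lt (zero_lt_topF hb2)
  refine ⟨⟨toLex z, hzmem⟩, ?_, ?_⟩
  · refine Subtype.mk_lt_mk.2 ?_
    show lexLT b (ofLex x) z
    refine ⟨n, fun m hm => ?_, ?_⟩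
    · rw [h1 m hm]
      simp only [hz]
      rw [if_pos (lt_trans hm hMn)]
    · show ofLex x n < z n
      simp only [hz]
      rw [if_pos hMn]
      exact h2
  · refine Subtype.mk_lt_mk.2 ?_
    show lexLT b z (ofLex y)
    refine ⟨M, fun m hm => by simp only [hz]; rw [if_pos hm], ?_⟩
    show z M < ofLex y M
    have hzM : z M = zeroF hb2 := by simp [hz]
    rw [hzM, hyM]
    exact zero_lt_topF hb2

lemma noMax_Ab (hb2 : 2 ≤ b) : NoMaxOrder (LexSub (AbSet b)) := by
  have hb : 0 < b := by omega
  constructor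
  rintro ⟨x, hx⟩
  obtain ⟨N, hN⟩ := hx.1
  obtain ⟨n₀, hn₀⟩ := exists_ne_topF hb hx.2
  have hn₀N : n₀ < N := by
    by_contra hc
    exact hn₀ (eq_topF (hN n₀ (not_lt.1 hc)))
  set P := fun n => ofLex x n ≠ topF hb with hP
  set nst := Nat.findGreatest P N with hnst
  have hPnst : P nst := Nat.findGreatest_spec (m := n₀) (le_of_lt hn₀N) hn₀
  have hafter : ∀ m, nst < m → ofLex x m = topF hb := by
    intro m hm
    by_cases h : m ≤ N
    · by_contra hc
      exact Nat.findGreatest_is_greatest hm h hc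
    · exact eq_topF (hN m (by omega))
  set z : ℕ → Fin b := fun m => if m < nst then ofLex x m else if m = nst then topF hb
    else if m = nst + 1 then zeroF hb2 else topF hb with hz
  have hzmem : z ∈ AbSet b := by
    refine mem_AbSet_intro hb (nst + 2) (fun m hm => ?_) (nst + 1) ?_
    · simp only [hz]
      rw [if_neg (by omega), if_neg (by omega), if_neg (by omega)]
    · have hzn : z (nst + 1) = zeroF hb2 := by simp [hz]
      rw [hzn]
      exact ne_of_lt (zero_lt_topF hb2)
  refine ⟨⟨toLex z, hzmem⟩, ?_⟩
  refine Subtype.mk_lt_mk.2 ?_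
  show lexLT b (ofLex x) z
  refine ⟨nst, fun m hm => by simp only [hz]; rw [if_pos hm], ?_⟩
  show ofLex x nst < z nst
  have hzn : z nst = topF hb := by simp [hz]
  rw [hzn]
  exact lt_of_le_of_ne (le_topF hb _) hPnst

lemma noMin_Ab (hb2 : 2 ≤ b) : NoMinOrder (LexSub (AbSet b)) := by
  have hb : 0 < b := by omega
  constructor
  rintro ⟨x, hx⟩
  obtain ⟨N, hN⟩ := hx.1
  have hex : ∃ n, ofLex x n ≠ zeroF hb2 := by
    refine ⟨N, ?_⟩
    rw [eq_topF (hN N le_rfl)]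
    exact (ne_of_lt (zero_lt_topF hb2)).symm
  set n₁ := @Nat.find _ (Classical.decPred _) hex with hn₁
  have h₁ := @Nat.find_spec _ (Classical.decPred _) hex
  have h₂ : ∀ m, m < n₁ → ofLex x m = zeroF hb2 := fun m hm => by
    have := @Nat.find_min _ (Classical.decPred _) hex m hm
    simpa using this
  set z : ℕ → Fin b := fun m => if m ≤ n₁ then zeroF hb2 else topF hb with hz
  have hzmem : z ∈ AbSet b := by
    refine mem_AbSet_intro hb (n₁ + 1) (fun m hm => ?_) n₁ ?_
    · simp only [hz]; rw [if_neg (by omega)]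
    · simp only [hz]; rw [if_pos le_rfl]
      exact ne_of_lt (zero_lt_topF hb2)
  refine ⟨⟨toLex z, hzmem⟩, ?_⟩
  refine Subtype.mk_lt_mk.2 ?_
  show lexLT b z (ofLex x)
  refine ⟨n₁, fun m hm => by simp only [hz]; rw [if_pos (le_of_lt hm), h₂ m hm], ?_⟩
  show z n₁ < ofLex x n₁
  have hzn : z n₁ = zeroF hb2 := by simp [hz]
  rw [hzn]
  exact lt_of_le_of_ne (by rw [Fin.le_def]; exact Nat.zero_le _) (Ne.symm h₁)

lemma nonempty_orderIso_Ab_Q (hb2 : 2 ≤ b) : Nonempty (LexSub (AbSet b) ≃o ℚ) := by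
  haveI := countable_Ab (b := b) (by omega)
  haveI := dense_Ab hb2
  haveI := noMax_Ab hb2
  haveI := noMin_Ab hb2
  haveI := nonempty_Ab hb2
  exact Order.iso_of_countable_dense _ _

end Ab

section Digits
variable (hb : 0 < b)

def digitF (k i n : ℕ) : Fin b := ⟨i / b ^ (k - 1 - n) % b, Nat.mod_lt _ hb⟩

def topExtNum (k i : ℕ) : ℕ → Fin b := fun n => if n < k then digitF hb k i n else topF hb

def idxL : List (Fin b) → ℕ := fun s => s.foldl (fun a d => a * b + d.val) 0

lemma idxL_append (s : List (Fin b)) (d : Fin b) :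
    idxL (s ++ [d]) = b * idxL s + d.val := by
  rw [idxL, List.foldl_append]
  show (idxL s) * b + d.val = b * idxL s + d.val
  rw [mul_comm]

lemma idxL_lt (s : List (Fin b)) : idxL s < b ^ s.length := by
  induction s using List.reverseRecOn with
  | nil => simp [idxL]
  | append_singleton s d ih =>
    rw [idxL_append]
    have hd := d.2
    calc b * idxL s + d.val < b * idxL s + b := by omega
    _ = b * (idxL s + 1) := by rw [Nat.mul_succ]
    _ ≤ b * b ^ s.length := Nat.mul_le_mul_left b ih
    _ = b ^ (s ++ [d]).length := by
        rw [← pow_succ']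
        simp

include hb

lemma div_pow_succ_mod {i d m : ℕ} (hd : d < b) :
    (b * i + d) / b ^ (m + 1) % b = i / b ^ m % b := by
  have h1 : (b * i + d) / b = i := by
    rw [Nat.mul_add_div hb, Nat.div_eq_of_lt hd, add_zero]
  have h2 : (b * i + d) / b ^ (m + 1) = i / b ^ m := by
    rw [pow_succ', ← Nat.div_div_eq_div_mul, h1]
  rw [h2]

lemma mul_add_mod_lt {i d : ℕ} (hd : d < b) : (b * i + d) % b = d := by
  rw [Nat.mul_add_mod]
  exact Nat.mod_eq_of_lt hd

lemma high_shift {q r m j : ℕ} (hj : 0 < j) :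
    (b ^ (m + j) * q + r) / b ^ m % b = r / b ^ m % b := by
  have h1 : b ^ (m + j) * q = b ^ m * (b ^ j * q) := by
    rw [pow_add, mul_assoc]
  rw [h1, Nat.mul_add_div (pow_pos hb m)]
  have h2 : b ^ j * q = b * (b ^ (j - 1) * q) := by
    rw [← mul_assoc, ← pow_succ']
    congr 2
    omega
  rw [h2, Nat.add_comm, Nat.add_mul_mod_self_left]

lemma shiftL1 (k i n : ℕ) :
    topExtNum hb (k + 1) i (n + 1) = topExtNum hb k (i % b ^ k) n := by
  by_cases hn : n < k
  · rw [topExtNum, if_pos (by omega), topExtNum, if_pos hn]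
    apply Fin.ext
    show i / b ^ (k + 1 - 1 - (n + 1)) % b = (i % b ^ k) / b ^ (k - 1 - n) % b
    have he : k + 1 - 1 - (n + 1) = k - 1 - n := by omega
    rw [he]
    set m := k - 1 - n with hm
    have hkm : k = m + (n + 1) := by omega
    have hd := Nat.div_add_mod i (b ^ k)
    set q := i / b ^ k with hq
    set r := i % b ^ k with hr
    calc i / b ^ m % b = (b ^ k * q + r) / b ^ m % b := by rw [hd]
    _ = r / b ^ m % b := by rw [hkm]; exact high_shift hb (Nat.succ_pos n)
  · rw [topExtNum, if_neg (by omega), topExtNum, if_neg hn]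

lemma keyMono : ∀ k i j, i < j → j < b ^ k →
    lexLT b (topExtNum hb k i) (topExtNum hb k j) := by
  intro k
  induction k with
  | zero => intro i j hij hj; rw [pow_zero] at hj; omega
  | succ k ih =>
    intro i j hij hj
    have hbk : 0 < b ^ k := pow_pos hb k
    have ha : i / b ^ k ≤ j / b ^ k := Nat.div_le_div_right (le_of_lt hij)
    have hjb : j / b ^ k < b := by
      rw [Nat.div_lt_iff_lt_mul hbk]
      calc j < b ^ (k+1) := hj
      _ = b * b ^ k := by rw [pow_succ']
    have hdig0 : ∀ v : ℕ, topExtNum hb (k+1) v 0 = ⟨v / b ^ k % b, Nat.mod_lt _ hb⟩ := by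
      intro v
      rw [topExtNum, if_pos (Nat.succ_pos k)]
      apply Fin.ext
      show v / b ^ (k + 1 - 1 - 0) % b = v / b ^ k % b
      have he : k + 1 - 1 - 0 = k := by omega
      rw [he]
    rcases lt_or_eq_of_le ha with hlt | heq
    · refine ⟨0, fun m hm => absurd hm (Nat.not_lt_zero m), ?_⟩
      rw [hdig0 i, hdig0 j]
      show i / b ^ k % b < j / b ^ k % b
      rw [Nat.mod_eq_of_lt hjb, Nat.mod_eq_of_lt (lt_of_le_of_lt ha hjb)]
      exact hlt
    · have hij' : i % b ^ k < j % b ^ k := by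
        have h1 := Nat.div_add_mod i (b ^ k)
        have h2 := Nat.div_add_mod j (b ^ k)
        rw [heq] at h1
        omega
      obtain ⟨n, hpre, hstrict⟩ := ih (i % b ^ k) (j % b ^ k) hij' (Nat.mod_lt _ hbk)
      refine ⟨n + 1, fun m hm => ?_, ?_⟩
      · match m, hm with
        | 0, _ => rw [hdig0 i, hdig0 j]; apply Fin.ext; show i / b ^ k % b = j / b ^ k % b; rw [heq]
        | (m' + 1), hm' => rw [shiftL1, shiftL1]; exact hpre m' (by omega)
      · rw [shiftL1, shiftL1]
        exact hstrict

lemma topExtNum_inj {k i j : ℕ} (hi : i < b ^ k) (hj : j < b ^ k)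
    (he : topExtNum hb k i = topExtNum hb k j) : i = j := by
  by_contra hne
  rcases Nat.lt_or_ge i j with hlt | hge
  · obtain ⟨n, -, h2⟩ := keyMono hb k i j hlt hj
    rw [he] at h2
    exact lt_irrefl _ h2
  · have hlt : j < i := by omega
    obtain ⟨n, -, h2⟩ := keyMono hb k j i hlt hi
    rw [he] at h2
    exact lt_irrefl _ h2

lemma pow_sub_one_digits {m k : ℕ} (hm : m < k) : (b ^ k - 1) / b ^ m % b = b - 1 := by
  have hbm : 0 < b ^ m := pow_pos hb m
  have hbkm : 0 < b ^ (k - m) := pow_pos hb _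
  have hmul : b ^ m * b ^ (k - m) = b ^ k := by
    rw [← pow_add]
    congr 1
    omega
  have hle : b ^ m ≤ b ^ k := by
    rw [← hmul]
    exact Nat.le_mul_of_pos_right _ hbkm
  have hbk : 0 < b ^ k := pow_pos hb k
  have hdecomp : b ^ k - 1 = b ^ m * (b ^ (k - m) - 1) + (b ^ m - 1) := by
    rw [Nat.mul_sub_one, hmul]
    omega
  rw [hdecomp, Nat.mul_add_div hbm, Nat.div_eq_of_lt (by omega), add_zero]
  have hkm : 0 < k - m := by omega
  have hb1 : b * b ^ (k - m - 1) = b ^ (k - m) := by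
    rw [← pow_succ']
    congr 1
    omega
  have hbkm1 : 0 < b ^ (k - m - 1) := pow_pos hb _
  have hble : b ≤ b ^ (k - m) := by
    rw [← hb1]
    exact Nat.le_mul_of_pos_right _ hbkm1
  have h3 : b ^ (k - m) - 1 = b * (b ^ (k - m - 1) - 1) + (b - 1) := by
    rw [Nat.mul_sub_one, hb1]
    omega
  rw [h3, Nat.mul_add_mod, Nat.mod_eq_of_lt (by omega)]

lemma topExtNum_top (k : ℕ) : topExtNum hb k (b ^ k - 1) = topSeqF hb := by
  funext n
  rw [topExtNum]
  by_cases hn : n < k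
  · rw [if_pos hn]
    apply Fin.ext
    show (b ^ k - 1) / b ^ (k - 1 - n) % b = b - 1
    exact pow_sub_one_digits hb (by omega)
  · rw [if_neg hn]
    rfl

lemma topExtNum_step (k i : ℕ) :
    topExtNum hb (k + 1) (b * i + (b - 1)) = topExtNum hb k i := by
  funext n
  by_cases hn : n < k
  · rw [topExtNum, if_pos (by omega), topExtNum, if_pos hn]
    apply Fin.ext
    show (b * i + (b - 1)) / b ^ (k + 1 - 1 - n) % b = i / b ^ (k - 1 - n) % b
    have he : k + 1 - 1 - n = (k - 1 - n) + 1 := by omega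
    rw [he]
    exact div_pow_succ_mod hb (by omega)
  · by_cases hn' : n = k
    · subst hn'
      rw [topExtNum, if_pos (by omega), topExtNum, if_neg (lt_irrefl n)]
      apply Fin.ext
      show (b * i + (b - 1)) / b ^ (n + 1 - 1 - n) % b = b - 1
      have he : n + 1 - 1 - n = 0 := by omega
      rw [he, pow_zero, Nat.div_one, mul_add_mod_lt hb (by omega)]
    · rw [topExtNum, if_neg (by omega), topExtNum, if_neg hn]

lemma digitF_idxL (s : List (Fin b)) : ∀ n (hn : n < s.length),
    digitF hb s.length (idxL s) n = s.get ⟨n, hn⟩ := by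
  induction s using List.reverseRecOn with
  | nil => intro n hn; simp at hn
  | append_singleton s d ih =>
    intro n hn
    have hlen : (s ++ [d]).length = s.length + 1 := by simp
    by_cases h : n < s.length
    · have e1 : digitF hb (s ++ [d]).length (idxL (s ++ [d])) n = digitF hb s.length (idxL s) n := by
        apply Fin.ext
        show idxL (s ++ [d]) / b ^ ((s ++ [d]).length - 1 - n) % b
          = idxL s / b ^ (s.length - 1 - n) % b
        rw [idxL_append, hlen]
        have he : s.length + 1 - 1 - n = (s.length - 1 - n) + 1 := by omega
        rw [he]
        exact div_pow_succ_mod hb d.2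
      rw [e1, ih n h]
      have : (s ++ [d]).get ⟨n, hn⟩ = s.get ⟨n, h⟩ := by
        simp [List.getElem_append_left h]
      rw [this]
    · have hnk : n = s.length := by
        rw [hlen] at hn
        omega
      subst hnk
      have e2 : (s ++ [d]).get ⟨s.length, hn⟩ = d := by
        simp
      rw [e2]
      apply Fin.ext
      show idxL (s ++ [d]) / b ^ ((s ++ [d]).length - 1 - s.length) % b = d.val
      rw [idxL_append, hlen]
      have he : s.length + 1 - 1 - s.length = 0 := by omega
      rw [he, pow_zero, Nat.div_one, mul_add_mod_lt hb d.2]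

end Digits

section Hard
variable {b : ℕ}

lemma lexLT_topSeq {hb : 0 < b} {x : ℕ → Fin b} (hnt : ¬ isTop x) :
    lexLT b x (topSeqF hb) := by
  rcases le_topSeqF hb x with he | hlt
  · exact absurd ((isTop_iff hb).2 he) hnt
  · exact hlt

lemma lexLT_not_le {x y : ℕ → Fin b} (h : lexLT b x y) : ¬ lexLE b y x := by
  intro hc
  exact absurd ((lexLE_iff y x).1 hc) (not_le.2 ((lexLT_iff x y).1 h))

lemma not_le_lexLT {x y : ℕ → Fin b} (h : ¬ lexLE b x y) : lexLT b y x :=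
  (lexLT_iff y x).2 (not_le.1 fun hc => h ((lexLE_iff x y).2 hc))

lemma mem_Ab_topExtNum (hb2 : 2 ≤ b) {k i : ℕ} (hi : i + 1 < b ^ k) :
    topExtNum (show 0 < b by omega) k i ∈ AbSet b := by
  have hb : 0 < b := by omega
  constructor
  · exact ⟨k, fun n hn j => by
      rw [topExtNum, if_neg (not_lt.2 hn)]
      exact le_topF hb j⟩
  · intro htp
    have he : topExtNum hb k i = topSeqF hb := (isTop_iff hb).1 htp
    rw [← topExtNum_top hb k] at he
    have : i = b ^ k - 1 := topExtNum_inj hb (by omega) (by omega) he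
    omega

def TnumD (hb : 0 < b) (ψ : (ℕ → Fin b) → ℕ → Fin b) (k i : ℕ) : ℕ → Fin b :=
  if i + 1 < b ^ k then ψ (topExtNum hb k i) else topSeqF hb

lemma TnumD_last (hb : 0 < b) (ψ : (ℕ → Fin b) → ℕ → Fin b) (k : ℕ) :
    TnumD hb ψ k (b ^ k - 1) = topSeqF hb := by
  have := pow_pos hb k
  rw [TnumD, if_neg (by omega)]

lemma exists_Inum (hb : 0 < b) (ψ : (ℕ → Fin b) → ℕ → Fin b) (x : ℕ → Fin b) (k : ℕ) :
    ∃ i, lexLE b x (TnumD hb ψ k i) :=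
  ⟨b ^ k - 1, by rw [TnumD_last]; exact le_topSeqF hb x⟩

def InumD (hb : 0 < b) (ψ : (ℕ → Fin b) → ℕ → Fin b) (x : ℕ → Fin b) (k : ℕ) : ℕ :=
  @Nat.find _ (Classical.decPred _) (exists_Inum hb ψ x k)

def gD (hb : 0 < b) (ψ : (ℕ → Fin b) → ℕ → Fin b) (x : ℕ → Fin b) : ℕ → Fin b :=
  fun n => ⟨InumD hb ψ x (n + 1) % b, Nat.mod_lt _ hb⟩

variable (hb : 0 < b) (ψ : (ℕ → Fin b) → ℕ → Fin b)

lemma Inum_spec (x : ℕ → Fin b) (k : ℕ) : lexLE b x (TnumD hb ψ k (InumD hb ψ x k)) :=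
  @Nat.find_spec _ (Classical.decPred _) (exists_Inum hb ψ x k)

lemma Inum_min (x : ℕ → Fin b) (k : ℕ) {j : ℕ} (hj : j < InumD hb ψ x k) :
    ¬ lexLE b x (TnumD hb ψ k j) :=
  @Nat.find_min _ (Classical.decPred _) (exists_Inum hb ψ x k) j hj

lemma Inum_le (x : ℕ → Fin b) (k : ℕ) {i : ℕ} (hi : lexLE b x (TnumD hb ψ k i)) :
    InumD hb ψ x k ≤ i :=
  @Nat.find_min' _ (Classical.decPred _) (exists_Inum hb ψ x k) i hi

lemma Inum_lt (x : ℕ → Fin b) (k : ℕ) : InumD hb ψ x k < b ^ k := by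
  have h1 : InumD hb ψ x k ≤ b ^ k - 1 :=
    Inum_le hb ψ x k (by rw [TnumD_last]; exact le_topSeqF hb x)
  have := pow_pos hb k
  omega

lemma Inum_eq_of (x : ℕ → Fin b) (k i : ℕ) (h1 : lexLE b x (TnumD hb ψ k i))
    (h2 : ∀ j, j < i → ¬ lexLE b x (TnumD hb ψ k j)) : InumD hb ψ x k = i := by
  have hle := Inum_le hb ψ x k h1
  rcases Nat.lt_or_ge (InumD hb ψ x k) i with hlt | hge
  · exact absurd (Inum_spec hb ψ x k) (h2 _ hlt)
  · omega

lemma Inum_zero (x : ℕ → Fin b) : InumD hb ψ x 0 = 0 := by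
  refine Inum_eq_of hb ψ x 0 0 ?_ (fun j hj => absurd hj (Nat.not_lt_zero j))
  have h1 : TnumD hb ψ 0 0 = topSeqF hb := by
    rw [TnumD, if_neg (by rw [pow_zero]; omega)]
  rw [h1]
  exact le_topSeqF hb x

end Hard

section Chain
variable {b : ℕ} (hb : 0 < b) (ψ : (ℕ → Fin b) → ℕ → Fin b) {Z : Set (ℕ → Fin b)}

lemma T_chain (hb2 : 2 ≤ b) (hZY : ∀ z ∈ Z, ¬ isTop z)
    (hψmono : ∀ a a', a ∈ AbSet b → a' ∈ AbSet b → lexLT b a a' → lexLT b (ψ a) (ψ a'))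
    (hψmem : ∀ a ∈ AbSet b, ψ a ∈ Z) :
    ∀ k i j, i < j → j < b ^ k → lexLT b (TnumD hb ψ k i) (TnumD hb ψ k j) := by
  intro k i j hij hj
  have hi1 : i + 1 < b ^ k := by omega
  rw [TnumD, if_pos hi1]
  by_cases hj1 : j + 1 < b ^ k
  · rw [TnumD, if_pos hj1]
    exact hψmono _ _ (mem_Ab_topExtNum hb2 hi1) (mem_Ab_topExtNum hb2 hj1)
      (keyMono hb k i j hij hj)
  · rw [TnumD, if_neg hj1]
    exact lexLT_topSeq (hZY _ (hψmem _ (mem_Ab_topExtNum hb2 hi1)))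

lemma T_le_chain (hb2 : 2 ≤ b) (hZY : ∀ z ∈ Z, ¬ isTop z)
    (hψmono : ∀ a a', a ∈ AbSet b → a' ∈ AbSet b → lexLT b a a' → lexLT b (ψ a) (ψ a'))
    (hψmem : ∀ a ∈ AbSet b, ψ a ∈ Z) :
    ∀ k i j, i ≤ j → j < b ^ k → lexLE b (TnumD hb ψ k i) (TnumD hb ψ k j) := by
  intro k i j hij hj
  rcases Nat.eq_or_lt_of_le hij with rfl | hlt
  · exact Or.inl rfl
  · exact Or.inr (T_chain hb ψ hb2 hZY hψmono hψmem k i j hlt hj)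

lemma T_step : ∀ k i, i < b ^ k →
    TnumD hb ψ (k + 1) (b * i + (b - 1)) = TnumD hb ψ k i := by
  intro k i hi
  have hpow : b ^ (k + 1) = b * b ^ k := by rw [pow_succ']
  by_cases hi1 : i + 1 < b ^ k
  · have he2 : b * (i + 2) = b * i + b + b := by ring
    have hle : b * (i + 2) ≤ b * b ^ k := Nat.mul_le_mul_left b (by omega)
    have hcond : b * i + (b - 1) + 1 < b ^ (k + 1) := by omega
    rw [TnumD, if_pos hcond, TnumD, if_pos hi1, topExtNum_step hb k i]
  · have hieq : i + 1 = b ^ k := by omega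
    have he2 : b * (i + 1) = b * i + b := by ring
    have hcond : ¬ (b * i + (b - 1) + 1 < b ^ (k + 1)) := by
      rw [hpow, ← hieq]
      omega
    rw [TnumD, if_neg hcond, TnumD, if_neg hi1]

lemma Inum_div (hb2 : 2 ≤ b) (hZY : ∀ z ∈ Z, ¬ isTop z)
    (hψmono : ∀ a a', a ∈ AbSet b → a' ∈ AbSet b → lexLT b a a' → lexLT b (ψ a) (ψ a'))
    (hψmem : ∀ a ∈ AbSet b, ψ a ∈ Z) (x : ℕ → Fin b) (k : ℕ) :
    InumD hb ψ x (k + 1) / b = InumD hb ψ x k := by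
  set i := InumD hb ψ x k with hi
  have hik : i < b ^ k := Inum_lt hb ψ x k
  have hup : InumD hb ψ x (k + 1) ≤ b * i + (b - 1) := by
    apply Inum_le
    rw [T_step hb ψ k i hik]
    exact Inum_spec hb ψ x k
  have hlow : b * i ≤ InumD hb ψ x (k + 1) := by
    by_contra hc
    push_neg at hc
    have hipos : 0 < i := by
      rcases Nat.eq_zero_or_pos i with h0 | h
      · rw [h0, Nat.mul_zero] at hc
        omega
      · exact h
    set j := InumD hb ψ x (k + 1) with hj
    have hji : j ≤ b * (i - 1) + (b - 1) := by
      have : b * (i - 1) + b = b * i := by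
        have := Nat.mul_sub_one b i
        have h2 : b * (i-1) = b * i - b := by
          rw [Nat.mul_sub]
          omega
        have h3 : b ≤ b * i := Nat.le_mul_of_pos_right b hipos
        omega
      omega
    have hbound : b * (i - 1) + (b - 1) < b ^ (k + 1) := by
      have h4 : b * (i - 1) + b = b * i := by
        have h2 : b * (i-1) = b * i - b := by
          rw [Nat.mul_sub]
          omega
        have h3 : b ≤ b * i := Nat.le_mul_of_pos_right b hipos
        omega
      have h5 : b * i ≤ b * b ^ k := Nat.mul_le_mul_left b (le_of_lt hik)
      have hpow : b ^ (k + 1) = b * b ^ k := by rw [pow_succ']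
      omega
    have hle2 : lexLE b x (TnumD hb ψ (k + 1) (b * (i - 1) + (b - 1))) := by
      rcases Nat.eq_or_lt_of_le hji with heq | hlt
      · rw [← heq]
        exact Inum_spec hb ψ x (k + 1)
      · exact lexLE_trans (Inum_spec hb ψ x (k + 1))
          (Or.inr (T_chain hb ψ hb2 hZY hψmono hψmem (k + 1) j _ hlt hbound))
    rw [T_step hb ψ k (i - 1) (by omega)] at hle2
    have := Inum_le hb ψ x k hle2
    omega
  have hcomm : i * b = b * i := Nat.mul_comm i b
  have h2 := Nat.succ_mul i b
  refine Nat.div_eq_of_lt_le (by omega) ?_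
  rw [h2]
  omega

end Chain

section Chain2
variable {b : ℕ} (hb : 0 < b) (ψ : (ℕ → Fin b) → ℕ → Fin b) {Z : Set (ℕ → Fin b)}

lemma Inum_succ_eq (hb2 : 2 ≤ b) (hZY : ∀ z ∈ Z, ¬ isTop z)
    (hψmono : ∀ a a', a ∈ AbSet b → a' ∈ AbSet b → lexLT b a a' → lexLT b (ψ a) (ψ a'))
    (hψmem : ∀ a ∈ AbSet b, ψ a ∈ Z) (x : ℕ → Fin b) (k : ℕ) :
    InumD hb ψ x (k + 1) = b * InumD hb ψ x k + (gD hb ψ x k).val := by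
  have hd := (Nat.div_add_mod (InumD hb ψ x (k + 1)) b).symm
  rw [Inum_div hb ψ hb2 hZY hψmono hψmem x k] at hd
  exact hd

lemma Inum_prefix (hb2 : 2 ≤ b) (hZY : ∀ z ∈ Z, ¬ isTop z)
    (hψmono : ∀ a a', a ∈ AbSet b → a' ∈ AbSet b → lexLT b a a' → lexLT b (ψ a) (ψ a'))
    (hψmem : ∀ a ∈ AbSet b, ψ a ∈ Z) (x : ℕ → Fin b) :
    ∀ k m, m ≤ k → InumD hb ψ x m = InumD hb ψ x k / b ^ (k - m) := by
  intro k
  induction k with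
  | zero =>
    intro m hm
    have hm0 : m = 0 := by omega
    subst hm0
    rw [Nat.sub_zero, pow_zero, Nat.div_one]
  | succ k ih =>
    intro m hm
    by_cases hmk : m = k + 1
    · subst hmk
      rw [Nat.sub_self, pow_zero, Nat.div_one]
    · have hm' : m ≤ k := by omega
      rw [ih m hm', ← Inum_div hb ψ hb2 hZY hψmono hψmem x k, Nat.div_div_eq_div_mul]
      congr 1
      rw [← pow_succ']
      congr 1
      omega

lemma gD_digit (hb2 : 2 ≤ b) (hZY : ∀ z ∈ Z, ¬ isTop z)
    (hψmono : ∀ a a', a ∈ AbSet b → a' ∈ AbSet b → lexLT b a a' → lexLT b (ψ a) (ψ a'))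
    (hψmem : ∀ a ∈ AbSet b, ψ a ∈ Z) (x : ℕ → Fin b) {k n : ℕ} (hn : n < k) :
    gD hb ψ x n = digitF hb k (InumD hb ψ x k) n := by
  apply Fin.ext
  show InumD hb ψ x (n + 1) % b = InumD hb ψ x k / b ^ (k - 1 - n) % b
  rw [Inum_prefix hb ψ hb2 hZY hψmono hψmem x k (n + 1) (by omega)]
  have he : k - (n + 1) = k - 1 - n := by omega
  rw [he]

def UD (hb : 0 < b) (ψ : (ℕ → Fin b) → ℕ → Fin b) (k i : ℕ) : Set (ℕ → Fin b) :=
  {x | lexLE b x (TnumD hb ψ k i) ∧ ∀ j, j < i → ¬ lexLE b x (TnumD hb ψ k j)}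

lemma mem_UD_iff (x : ℕ → Fin b) (k i : ℕ) :
    x ∈ UD hb ψ k i ↔ InumD hb ψ x k = i := by
  constructor
  · rintro ⟨h1, h2⟩
    exact Inum_eq_of hb ψ x k i h1 h2
  · rintro rfl
    exact ⟨Inum_spec hb ψ x k, fun j hj => Inum_min hb ψ x k hj⟩

lemma gD_preimage (hb2 : 2 ≤ b) (hZY : ∀ z ∈ Z, ¬ isTop z)
    (hψmono : ∀ a a', a ∈ AbSet b → a' ∈ AbSet b → lexLT b a a' → lexLT b (ψ a) (ψ a'))
    (hψmem : ∀ a ∈ AbSet b, ψ a ∈ Z) (s : List (Fin b)) :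
    gD hb ψ ⁻¹' W b s = UD hb ψ s.length (idxL s) := by
  ext x
  rw [Set.mem_preimage, mem_UD_iff]
  constructor
  · intro hx
    have hIlt := Inum_lt hb ψ x s.length
    have hslt := idxL_lt s
    apply topExtNum_inj hb hIlt hslt
    funext n
    by_cases hn : n < s.length
    · rw [topExtNum, if_pos hn, topExtNum, if_pos hn]
      have h1 := gD_digit hb ψ hb2 hZY hψmono hψmem x hn
      have h2 := digitF_idxL hb s n hn
      rw [← h1, h2]
      exact hx n hn
    · rw [topExtNum, if_neg hn, topExtNum, if_neg hn]
  · intro hI i hi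
    rw [gD_digit hb ψ hb2 hZY hψmono hψmem x hi, hI]
    exact digitF_idxL hb s i hi

lemma UD_greatest (hb2 : 2 ≤ b) (hZY : ∀ z ∈ Z, ¬ isTop z)
    (hψmono : ∀ a a', a ∈ AbSet b → a' ∈ AbSet b → lexLT b a a' → lexLT b (ψ a) (ψ a'))
    (hψmem : ∀ a ∈ AbSet b, ψ a ∈ Z) {k i : ℕ} (hi : i < b ^ k) :
    IsGreatestLex b (UD hb ψ k i) (TnumD hb ψ k i) := by
  refine ⟨⟨Or.inl rfl, fun j hj => ?_⟩, fun y hy => hy.1⟩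
  exact lexLT_not_le (T_chain hb ψ hb2 hZY hψmono hψmem k j i hj hi)

lemma TnumD_evTop (hb2 : 2 ≤ b) (hZA : Z ⊆ AbSet b) (hψmem : ∀ a ∈ AbSet b, ψ a ∈ Z) (k i : ℕ) :
    evTop (TnumD hb ψ k i) := by
  rw [TnumD]
  by_cases hc : i + 1 < b ^ k
  · rw [if_pos hc]
    exact (hZA (hψmem _ (mem_Ab_topExtNum hb2 hc))).1
  · rw [if_neg hc]
    exact ⟨0, fun n _ j => le_topF hb j⟩

lemma UD_clopen (hb2 : 2 ≤ b) (hZA : Z ⊆ AbSet b) (hψmem : ∀ a ∈ AbSet b, ψ a ∈ Z) (k i : ℕ) :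
    IsClopen (UD hb ψ k i) := by
  have hle : ∀ j, IsClopen {x : ℕ → Fin b | lexLE b x (TnumD hb ψ k j)} := fun j =>
    ⟨isClosed_le_set _, isOpen_le_set (TnumD_evTop hb ψ hb2 hZA hψmem k j)⟩
  have heq : UD hb ψ k i = {x : ℕ → Fin b | lexLE b x (TnumD hb ψ k i)} \
      ⋃ j ∈ Finset.range i, {x : ℕ → Fin b | lexLE b x (TnumD hb ψ k j)} := by
    ext x
    simp only [UD, Set.mem_setOf_eq, Set.mem_diff, Set.mem_iUnion, Finset.mem_range,
      not_exists, exists_prop]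
    tauto
  rw [heq]
  exact (hle i).diff (isClopen_biUnion_finset fun j _ => hle j)

lemma gD_continuous (hb2 : 2 ≤ b) (hZA : Z ⊆ AbSet b) (hψmem : ∀ a ∈ AbSet b, ψ a ∈ Z) :
    Continuous (gD hb ψ) := by
  apply continuous_pi
  intro n
  have hlc : IsLocallyConstant (fun x => InumD hb ψ x (n + 1)) := by
    rw [IsLocallyConstant.iff_isOpen_fiber]
    intro i
    have he : (fun x => InumD hb ψ x (n + 1)) ⁻¹' {i} = UD hb ψ (n + 1) i := by
      ext x
      rw [Set.mem_preimage, Set.mem_singleton_iff, mem_UD_iff]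
    rw [he]
    exact (UD_clopen hb ψ hb2 hZA hψmem (n + 1) i).2
  exact (hlc.comp (fun v : ℕ => (⟨v % b, Nat.mod_lt _ hb⟩ : Fin b))).continuous

lemma gD_monotone (hb2 : 2 ≤ b) (hZY : ∀ z ∈ Z, ¬ isTop z)
    (hψmono : ∀ a a', a ∈ AbSet b → a' ∈ AbSet b → lexLT b a a' → lexLT b (ψ a) (ψ a'))
    (hψmem : ∀ a ∈ AbSet b, ψ a ∈ Z) :
    ∀ x y, lexLE b x y → lexLE b (gD hb ψ x) (gD hb ψ y) := by
  intro x y hxy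
  have hImono : ∀ k, InumD hb ψ x k ≤ InumD hb ψ y k := fun k =>
    Inum_le hb ψ x k (lexLE_trans hxy (Inum_spec hb ψ y k))
  by_cases he : gD hb ψ x = gD hb ψ y
  · exact Or.inl he
  · have hne : ∃ n, gD hb ψ x n ≠ gD hb ψ y n := Function.ne_iff.1 he
    set n := @Nat.find _ (Classical.decPred _) hne with hn
    have hspec : gD hb ψ x n ≠ gD hb ψ y n := @Nat.find_spec _ (Classical.decPred _) hne
    have hprefix : ∀ m, m < n → gD hb ψ x m = gD hb ψ y m := fun m hm =>
      not_not.1 (@Nat.find_min _ (Classical.decPred _) hne m hm)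
    have hIeq : ∀ m, m ≤ n → InumD hb ψ x m = InumD hb ψ y m := by
      intro m
      induction m with
      | zero => intro _; rw [Inum_zero, Inum_zero]
      | succ p ih =>
        intro hp
        rw [Inum_succ_eq hb ψ hb2 hZY hψmono hψmem x p,
          Inum_succ_eq hb ψ hb2 hZY hψmono hψmem y p, ih (by omega), hprefix p (by omega)]
    refine Or.inr ⟨n, hprefix, ?_⟩
    have h1 := Inum_succ_eq hb ψ hb2 hZY hψmono hψmem x n
    have h2 := Inum_succ_eq hb ψ hb2 hZY hψmono hψmem y n
    have h3 := hImono (n + 1)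
    rw [h1, h2, hIeq n le_rfl] at h3
    have h4 : (gD hb ψ x n).val ≤ (gD hb ψ y n).val := by omega
    rw [Fin.lt_def]
    rcases Nat.eq_or_lt_of_le h4 with heq | hlt
    · exact absurd (Fin.ext heq) hspec
    · exact hlt

lemma listPrefix_succ (y : ℕ → Fin b) (k : ℕ) :
    listPrefix y (k + 1) = listPrefix y k ++ [y k] := by
  rw [listPrefix, listPrefix, List.ofFn_succ']
  rw [List.concat_eq_append]
  congr 1

lemma gD_surjective (hb2 : 2 ≤ b) (hZY : ∀ z ∈ Z, ¬ isTop z)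
    (hψmono : ∀ a a', a ∈ AbSet b → a' ∈ AbSet b → lexLT b a a' → lexLT b (ψ a) (ψ a'))
    (hψmem : ∀ a ∈ AbSet b, ψ a ∈ Z) (hZA : Z ⊆ AbSet b) :
    Function.Surjective (gD hb ψ) := by
  intro y
  set J : ℕ → ℕ := fun k => idxL (listPrefix y k) with hJ
  have hJsucc : ∀ k, J (k + 1) = b * J k + (y k).val := by
    intro k
    rw [hJ]
    show idxL (listPrefix y (k + 1)) = b * idxL (listPrefix y k) + (y k).val
    rw [listPrefix_succ, idxL_append]
  have hJlt : ∀ k, J k < b ^ k := fun k => by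
    have := idxL_lt (listPrefix y k)
    rwa [listPrefix_length] at this
  set V : ℕ → Set (ℕ → Fin b) := fun k => UD hb ψ k (J k) with hV
  have hVne : ∀ k, (V k).Nonempty :=
    fun k => ⟨TnumD hb ψ k (J k), (UD_greatest hb ψ hb2 hZY hψmono hψmem (hJlt k)).1⟩
  have hVcl : ∀ k, IsClosed (V k) := fun k => (UD_clopen hb ψ hb2 hZA hψmem k (J k)).1
  have hVsub : ∀ k, V (k + 1) ⊆ V k := by
    intro k x hx
    have h1 : InumD hb ψ x (k + 1) = J (k + 1) := (mem_UD_iff hb ψ x (k + 1) (J (k + 1))).1 hx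
    have h2 : InumD hb ψ x k = J k := by
      rw [← Inum_div hb ψ hb2 hZY hψmono hψmem x k, h1, hJsucc k, Nat.mul_add_div hb,
        Nat.div_eq_of_lt (y k).2, add_zero]
    exact (mem_UD_iff hb ψ x k (J k)).2 h2
  obtain ⟨x, hx⟩ := IsCompact.nonempty_iInter_of_sequence_nonempty_isCompact_isClosed
    V hVsub hVne ((hVcl 0).isCompact) hVcl
  refine ⟨x, ?_⟩
  funext n
  have hxn : x ∈ V (n + 1) := Set.mem_iInter.1 hx (n + 1)
  have h1 : InumD hb ψ x (n + 1) = J (n + 1) := (mem_UD_iff hb ψ x (n + 1) (J (n + 1))).1 hxn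
  apply Fin.ext
  show InumD hb ψ x (n + 1) % b = (y n).val
  rw [h1, hJsucc n, Nat.mul_add_mod, Nat.mod_eq_of_lt (y n).2]

lemma gD_fiber {h : (ℕ → Fin b) → ℕ → Fin b} (hb2 : 2 ≤ b) (hh : CSur b h)
    (hZY' : Z ⊆ Yset b h)
    (hψmono : ∀ a a', a ∈ AbSet b → a' ∈ AbSet b → lexLT b a a' → lexLT b (ψ a) (ψ a'))
    (hψmem : ∀ a ∈ AbSet b, ψ a ∈ Z) :
    ∀ x y, h x = h y → gD hb ψ x = gD hb ψ y := by
  have key : ∀ x y, h x = h y → lexLE b x y → ∀ k, InumD hb ψ x k = InumD hb ψ y k := by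
    intro x y hhxy hxy k
    have h1 : InumD hb ψ x k ≤ InumD hb ψ y k :=
      Inum_le hb ψ x k (lexLE_trans hxy (Inum_spec hb ψ y k))
    rcases Nat.eq_or_lt_of_le h1 with heq | hlt
    · exact heq
    · exfalso
      set i := InumD hb ψ x k with hi
      have hxT : lexLE b x (TnumD hb ψ k i) := Inum_spec hb ψ x k
      have hyT : ¬ lexLE b y (TnumD hb ψ k i) := Inum_min hb ψ y k hlt
      have hTy : lexLT b (TnumD hb ψ k i) y := not_le_lexLT hyT
      by_cases hc : i + 1 < b ^ k
      · have hTpsi : TnumD hb ψ k i = ψ (topExtNum hb k i) := by rw [TnumD, if_pos hc]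
        have hTZ : TnumD hb ψ k i ∈ Z := by
          rw [hTpsi]
          exact hψmem _ (mem_Ab_topExtNum hb2 hc)
        obtain ⟨⟨t, hgr⟩, -⟩ := hZY' hTZ
        have him : IsGreatestLex b (W b t) (h (TnumD hb ψ k i)) :=
          greatest_image hh.2.1 hh.2.2 hgr
        have h2 : lexLE b (h x) (h (TnumD hb ψ k i)) := hh.2.2 _ _ hxT
        have h3 : lexLE b (h (TnumD hb ψ k i)) (h y) := hh.2.2 _ _ (Or.inr hTy)
        have h4 : h (TnumD hb ψ k i) = h y :=
          lexLE_antisymm h3 (by rw [← hhxy]; exact h2)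
        have h5 : y ∈ h ⁻¹' W b t := by
          show h y ∈ W b t
          rw [← h4]
          exact him.1
        exact hyT (hgr.2 y h5)
      · have hTtop : TnumD hb ψ k i = topSeqF hb := by rw [TnumD, if_neg hc]
        rw [hTtop] at hyT
        exact hyT (le_topSeqF hb y)
  intro x y hxy
  rcases lexLE_total (b := b) x y with hle | hle
  · funext n
    apply Fin.ext
    show InumD hb ψ x (n + 1) % b = InumD hb ψ y (n + 1) % b
    rw [key x y hxy hle (n + 1)]
  · funext n
    apply Fin.ext
    show InumD hb ψ x (n + 1) % b = InumD hb ψ y (n + 1) % b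
    rw [key y x hxy.symm hle (n + 1)]

end Chain2

lemma hard_dir {b : ℕ} (hb2 : 2 ≤ b) {h : (ℕ → Fin b) → ℕ → Fin b} (hh : CSur b h)
    {Z : Set (ℕ → Fin b)} (hZ : Z ⊆ Yset b h) (ψ : (ℕ → Fin b) → ℕ → Fin b)
    (hψmono : ∀ a a', a ∈ AbSet b → a' ∈ AbSet b → lexLT b a a' → lexLT b (ψ a) (ψ a'))
    (hψmem : ∀ a ∈ AbSet b, ψ a ∈ Z)
    (hψsur : ∀ z ∈ Z, ∃ a ∈ AbSet b, ψ a = z) :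
    ∃ f, CSur b f ∧ Z = Yset b (f ∘ h) := by
  have hb : 0 < b := by omega
  have hZY : ∀ z ∈ Z, ¬ isTop z := fun z hz => (hZ hz).2
  have hZA : Z ⊆ AbSet b := fun z hz => Yset_subset_AbSet hh (hZ hz)
  have hgc : Continuous (gD hb ψ) := gD_continuous hb ψ hb2 hZA hψmem
  have hgs := gD_surjective hb ψ hb2 hZY hψmono hψmem hZA
  have hgm := gD_monotone hb ψ hb2 hZY hψmono hψmem
  haveI : Nonempty (ℕ → Fin b) := ⟨fun _ => ⟨0, by omega⟩⟩
  set f : (ℕ → Fin b) → ℕ → Fin b := fun z => gD hb ψ (Function.invFun h z) with hf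
  have hfh : f ∘ h = gD hb ψ := by
    funext x
    show gD hb ψ (Function.invFun h (h x)) = gD hb ψ x
    apply gD_fiber hb ψ hb2 hh hZ hψmono hψmem
    exact Function.invFun_eq ⟨x, rfl⟩
  have hfsur : Function.Surjective f := by
    intro y
    obtain ⟨x, hx⟩ := hgs y
    exact ⟨h x, (congrFun hfh x).trans hx⟩
  have hfm : ∀ z z', lexLE b z z' → lexLE b (f z) (f z') := by
    intro z z' hzz
    rcases hzz with rfl | hlt
    · exact Or.inl rfl
    · have hx : h (Function.invFun h z) = z := Function.invFun_eq (hh.2.1 z)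
      have hx' : h (Function.invFun h z') = z' := Function.invFun_eq (hh.2.1 z')
      have hxx : lexLE b (Function.invFun h z) (Function.invFun h z') := by
        by_contra hc
        have h2 := not_le_lexLT hc
        have h3 := hh.2.2 _ _ (Or.inr h2)
        rw [hx, hx'] at h3
        exact (lexLT_not_le hlt) h3
      exact hgm _ _ hxx
  have hfc : Continuous f := by
    have hq : IsQuotientMap h := (hh.1.isClosedMap).isQuotientMap hh.1 hh.2.1
    rw [hq.continuous_iff, hfh]
    exact hgc
  refine ⟨f, ⟨hfc, hfsur, hfm⟩, ?_⟩
  rw [hfh]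
  apply Set.eq_of_subset_of_subset
  · intro z hz
    obtain ⟨a, haAb, hψa⟩ := hψsur z hz
    obtain ⟨⟨N, hN⟩, hnt⟩ := haAb
    set s := listPrefix a N with hs
    set i := idxL s with hi
    have hlen : s.length = N := by rw [hs]; exact listPrefix_length a N
    have hilt : i < b ^ s.length := idxL_lt s
    have hae : topExtNum hb s.length i = a := by
      funext n
      rw [topExtNum]
      by_cases hn : n < s.length
      · rw [if_pos hn]
        rw [digitF_idxL hb s n hn]
        simp [hs, listPrefix]
      · rw [if_neg hn]
        exact (eq_topF (hN n (by rw [hlen] at hn; omega))).symm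
    have hi1 : i + 1 < b ^ s.length := by
      by_contra hc
      have := pow_pos hb s.length
      have hieq : i = b ^ s.length - 1 := by omega
      have hatop : a = topSeqF hb := by rw [← hae, hieq, topExtNum_top]
      exact hnt ((isTop_iff hb).2 hatop)
    have hTz : TnumD hb ψ s.length i = z := by rw [TnumD, if_pos hi1, hae, hψa]
    refine ⟨⟨s, ?_⟩, hZY z hz⟩
    rw [gD_preimage hb ψ hb2 hZY hψmono hψmem s, ← hTz]
    exact UD_greatest hb ψ hb2 hZY hψmono hψmem hilt
  · rintro x ⟨⟨s, hgr⟩, hnt⟩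
    rw [gD_preimage hb ψ hb2 hZY hψmono hψmem s] at hgr
    have hilt : idxL s < b ^ s.length := idxL_lt s
    have hx : x = TnumD hb ψ s.length (idxL s) :=
      greatestLex_unique hgr (UD_greatest hb ψ hb2 hZY hψmono hψmem hilt)
    by_cases hc : idxL s + 1 < b ^ s.length
    · rw [hx, TnumD, if_pos hc]
      exact hψmem _ (mem_Ab_topExtNum hb2 hc)
    · exfalso
      have htop : TnumD hb ψ s.length (idxL s) = topSeqF hb := by rw [TnumD, if_neg hc]
      apply hnt
      rw [hx, htop]
      intro n j
      exact le_topF hb j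

end S8
end

/-- for `h ∈ C↑_sur(b^ω)`, the subsets of `Y_h` order isomorphic to `ℚ`
are exactly the sets `Y_{f∘h}`, `f ∈ C↑_sur(b^ω)`. -/
theorem iso_subsets_of_Yset_eq_compositions (b : ℕ) (hb : 2 ≤ b)
    (h : (ℕ → Fin b) → (ℕ → Fin b)) (hh : CSur b h) :
    {Z : Set (ℕ → Fin b) | Z ⊆ Yset b h ∧ OrderIsoQ b Z} =
      {Z | ∃ f, CSur b f ∧ Z = Yset b (f ∘ h)} := by
  ext Z
  simp only [Set.mem_setOf_eq]
  constructor
  · rintro ⟨hsub, hiso⟩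
    obtain ⟨e⟩ := (S8.orderIsoQ_iff Z).1 hiso
    obtain ⟨e0⟩ := S8.nonempty_orderIso_Ab_Q hb
    set φ : S8.LexSub (AbSet b) ≃o S8.LexSub Z := (OrderIso.trans e0 e) with hφ
    set ψ : (ℕ → Fin b) → ℕ → Fin b :=
      fun a => if ha : a ∈ AbSet b then ofLex (φ ⟨toLex a, ha⟩).1 else a with hψ
    refine S8.hard_dir hb hh hsub ψ ?_ ?_ ?_
    · intro a a' ha ha' hlt
      simp only [hψ, dif_pos ha, dif_pos ha']
      have h1 : (⟨toLex a, ha⟩ : S8.LexSub (AbSet b)) < ⟨toLex a', ha'⟩ := by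
        refine Subtype.mk_lt_mk.2 ?_
        exact (S8.lexLT_iff a a').1 hlt
      have h2 := φ.strictMono h1
      rw [S8.lexLT_iff]
      exact Subtype.coe_lt_coe.2 h2
    · intro a ha
      simp only [hψ, dif_pos ha]
      exact (φ ⟨toLex a, ha⟩).2
    · intro z hz
      refine ⟨ofLex (φ.symm ⟨toLex z, hz⟩).1, (φ.symm ⟨toLex z, hz⟩).2, ?_⟩
      simp only [hψ, dif_pos (φ.symm ⟨toLex z, hz⟩).2]
      have he : (⟨toLex (ofLex (φ.symm ⟨toLex z, hz⟩).1), (φ.symm ⟨toLex z, hz⟩).2⟩ :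
          S8.LexSub (AbSet b)) = φ.symm ⟨toLex z, hz⟩ := Subtype.ext rfl
      rw [he, OrderIso.apply_symm_apply]
      rfl
  · rintro ⟨f, hf, rfl⟩
    refine ⟨S8.Yset_comp_subset hf hh, ?_⟩
    rw [S8.orderIsoQ_iff]
    obtain ⟨i1⟩ := S8.nonempty_orderIso_Yg_Ab (S8.CSur.comp hf hh)
    obtain ⟨i2⟩ := S8.nonempty_orderIso_Ab_Q hb
    exact ⟨OrderIso.trans i2.symm i1.symm⟩

end Statement8Proof
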